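/- Suppose T ∈ M_3(ℂ) has distinct eigenvalues λ_1, λ_2, λ_3 with corresponding unit eigenvectors x_1, x_2, x_3, and let y_1, y_2, y_3 be unit eigenvectors of T* corresponding to conj(λ_1), conj(λ_2), conj(λ_3). Let X = (x_1 | x_2 | x_3) and Y = (y_1 | y_2 | y_3) be the 3×3 matrices with these columns. If |⟨x_i, x_j⟩| = |⟨y_i, y_j⟩| for all 1 ≤ i < j ≤ 3, then |det X| = |det Y|. -/

import Mathlib

open Matrix

/-- The standard Hermitian inner product on `ℂⁿ`, linear in the first slot. -/
noncomputable def hinner {n : ℕ} (x y : Fin n → ℂ) : ℂ := ∑ i, x i * (starRingEnd ℂ) (y i)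


lemma hinner_smul_left {n : ℕ} (c : ℂ) (u v : Fin n → ℂ) :
    hinner (c • u) v = c * hinner u v := by
  simp [hinner, Finset.mul_sum, mul_assoc]

lemma hinner_smul_right {n : ℕ} (c : ℂ) (u v : Fin n → ℂ) :
    hinner u (c • v) = star c * hinner u v := by
  simp only [hinner, Pi.smul_apply, smul_eq_mul, _root_.map_mul, Finset.mul_sum, Complex.star_def]
  apply Finset.sum_congr rfl; intro i _; ring

lemma hinner_mulVec {n : ℕ} (A : Matrix (Fin n) (Fin n) ℂ) (u v : Fin n → ℂ) :
    hinner (A.mulVec u) v = hinner u (Aᴴ.mulVec v) := by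
  simp only [hinner, mulVec, dotProduct, conjTranspose_apply, map_sum, _root_.map_mul,
    Finset.sum_mul, Finset.mul_sum, Complex.star_def, Complex.conj_conj, RingHomCompTriple.comp_apply]
  rw [Finset.sum_comm]
  apply Finset.sum_congr rfl; intro i _; apply Finset.sum_congr rfl; intro j _
  simp; ring

theorem abs_det_eq_of_weak_angle_test (T : Matrix (Fin 3) (Fin 3) ℂ)
    (lam : Fin 3 → ℂ) (x y : Fin 3 → Fin 3 → ℂ)
    (hlam : Function.Injective lam)
    (hx : ∀ i, T.mulVec (x i) = lam i • x i)
    (hxu : ∀ i, hinner (x i) (x i) = 1)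
    (hy : ∀ i, Tᴴ.mulVec (y i) = (starRingEnd ℂ) (lam i) • y i)
    (hyu : ∀ i, hinner (y i) (y i) = 1)
    (X Y : Matrix (Fin 3) (Fin 3) ℂ)
    (hX : X = Matrix.of fun i j => x j i)
    (hY : Y = Matrix.of fun i j => y j i)
    (hwat : ∀ i j : Fin 3, i < j →
      ‖hinner (x i) (x j)‖ = ‖hinner (y i) (y j)‖) :
    ‖X.det‖ = ‖Y.det‖ := by
  classical
  -- nonzero eigenvectors
  have hx0 : ∀ i, x i ≠ 0 := by
    intro i h
    have := hxu i
    rw [h] at this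
    simp [hinner] at this
  -- linear independence of the x's
  have hli : LinearIndependent ℂ x := by
    apply Module.End.eigenvectors_linearIndependent' (Matrix.mulVecLin T) lam hlam
    intro i
    rw [Module.End.hasEigenvector_iff]
    refine ⟨Module.End.mem_eigenspace_iff.mpr ?_, hx0 i⟩
    simpa using hx i
  have hdetX : X.det ≠ 0 := by
    intro h
    obtain ⟨v, hv0, hv⟩ := (Matrix.exists_mulVec_eq_zero_iff).mpr h
    have : ∀ i, v i = 0 := by
      have hsum : ∑ j, v j • x j = 0 := by
        funext i
        have := congrFun hv i
        simpa [hX, Matrix.mulVec, dotProduct, mul_comm] using this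
      exact Fintype.linearIndependent_iff.mp hli v hsum
    exact hv0 (funext this)
  -- biorthogonality
  have hbi : ∀ i j, j ≠ i → hinner (x j) (y i) = 0 := by
    intro i j hij
    have e1 : hinner (T.mulVec (x j)) (y i) = hinner (x j) (Tᴴ.mulVec (y i)) :=
      hinner_mulVec T (x j) (y i)
    rw [hx, hy, hinner_smul_left, hinner_smul_right] at e1
    have : (lam j - lam i) * hinner (x j) (y i) = 0 := by
      rw [Complex.star_def, Complex.conj_conj] at e1
      linear_combination e1
    have hne : lam j - lam i ≠ 0 := sub_ne_zero.mpr (fun h => hij (hlam h))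
    exact (mul_eq_zero.mp this).resolve_left hne
  set d : Fin 3 → ℂ := fun i => hinner (x i) (y i) with hd
  -- entry descriptions
  have hinnerYX : ∀ i j, (Yᴴ * X) i j = hinner (x j) (y i) := by
    intro i j
    simp [Matrix.mul_apply, Matrix.conjTranspose_apply, hX, hY, hinner, mul_comm]
  have hYX : Yᴴ * X = Matrix.diagonal d := by
    ext i j
    rw [hinnerYX]
    by_cases h : j = i
    · subst h; simp [Matrix.diagonal, hd]
    · rw [hbi i j h]; simp [Matrix.diagonal, Ne.symm h]
  set G := Xᴴ * X with hGdef
  have hinnerG : ∀ i j, G i j = hinner (x j) (x i) := by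
    intro i j
    simp [hGdef, Matrix.mul_apply, Matrix.conjTranspose_apply, hX, hinner, mul_comm]
  have hΔ0 : G.det ≠ 0 := by
    rw [hGdef, Matrix.det_mul, Matrix.det_conjTranspose]
    exact mul_ne_zero (star_ne_zero.mpr hdetX) hdetX
  have hXu : IsUnit X.det := isUnit_iff_ne_zero.mpr hdetX
  have hYH : Yᴴ = Matrix.diagonal d * X⁻¹ := by
    calc Yᴴ = Yᴴ * (X * X⁻¹) := by rw [Matrix.mul_nonsing_inv X hXu, Matrix.mul_one]
    _ = (Yᴴ * X) * X⁻¹ := by rw [Matrix.mul_assoc]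
    _ = Matrix.diagonal d * X⁻¹ := by rw [hYX]
  have hYY : Yᴴ * Y = Matrix.diagonal d * G⁻¹ * Matrix.diagonal (fun i => star (d i)) := by
    have hYeq : Y = (X⁻¹)ᴴ * (Matrix.diagonal d)ᴴ := by
      calc Y = (Yᴴ)ᴴ := by rw [Matrix.conjTranspose_conjTranspose]
      _ = _ := by rw [hYH, Matrix.conjTranspose_mul]
    rw [hYH, hYeq, Matrix.conjTranspose_nonsing_inv, hGdef, Matrix.mul_inv_rev,
      Matrix.diagonal_conjTranspose]
    simp only [Matrix.mul_assoc, Pi.star_def]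
  have hinnerYY : ∀ i j, hinner (y i) (y j) = (Yᴴ * Y) j i := by
    intro i j
    simp [Matrix.mul_apply, Matrix.conjTranspose_apply, hY, hinner, mul_comm]
  have hEntry : ∀ i j, (Yᴴ * Y) i j = d i * (G.det⁻¹ * adjugate G i j) * star (d j) := by
    intro i j
    rw [hYY, Matrix.inv_def]
    simp [Matrix.mul_apply, Matrix.diagonal, Finset.sum_ite_eq, Finset.sum_ite_eq',
      Matrix.smul_apply, smul_eq_mul]
    left; ring
  -- hermitian facts
  have hGh : Gᴴ = G := by
    rw [hGdef, Matrix.conjTranspose_mul, Matrix.conjTranspose_conjTranspose]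
  have hstarG : ∀ i j, (starRingEnd ℂ) (G i j) = G j i := by
    intro i j
    have : Gᴴ j i = G j i := by rw [hGh]
    simpa [Matrix.conjTranspose_apply, Complex.star_def] using this
  have hstarΔ : (starRingEnd ℂ) G.det = G.det := by
    have := Matrix.det_conjTranspose G
    rw [hGh] at this
    simpa [Complex.star_def] using this.symm
  have hstaradj : ∀ i j, (starRingEnd ℂ) (adjugate G i j) = adjugate G j i := by
    intro i j
    have h : (adjugate G)ᴴ = adjugate G := by rw [Matrix.adjugate_conjTranspose, hGh]
    have : (adjugate G)ᴴ j i = adjugate G j i := by rw [h]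
    simpa [Matrix.conjTranspose_apply, Complex.star_def] using this
  have hG1 : ∀ i, G i i = 1 := by intro i; rw [hinnerG, hxu]
  have hEntry' : ∀ i j, (Yᴴ * Y) i j = d i * (G.det⁻¹ * adjugate G i j) * (starRingEnd ℂ) (d j) := by
    intro i j; rw [hEntry]; rw [Complex.star_def]
  -- unit-norm equations
  have hEq : ∀ i, d i * (starRingEnd ℂ) (d i) * adjugate G i i = G.det := by
    intro i
    have h1 : (Yᴴ * Y) i i = 1 := by rw [← hinnerYY, hyu]
    rw [hEntry'] at h1
    field_simp at h1
    linear_combination h1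
  -- the angle condition
  have hw := hwat 0 1 (by decide)
  rw [show hinner (x 0) (x 1) = G 1 0 from (hinnerG 1 0).symm, hinnerYY, hEntry'] at hw
  have hw2 : Complex.normSq (G 1 0) =
      Complex.normSq (d 1 * (G.det⁻¹ * adjugate G 1 0) * (starRingEnd ℂ) (d 0)) := by
    rw [← Complex.sq_norm, ← Complex.sq_norm, hw]
  have hw3 : G 1 0 * (starRingEnd ℂ) (G 1 0) =
      (d 1 * (G.det⁻¹ * adjugate G 1 0) * (starRingEnd ℂ) (d 0)) *
        (starRingEnd ℂ) (d 1 * (G.det⁻¹ * adjugate G 1 0) * (starRingEnd ℂ) (d 0)) := by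
    rw [Complex.mul_conj, Complex.mul_conj, hw2]
  have hF : G 1 0 * G 0 1 * (G.det * G.det) =
      (d 0 * (starRingEnd ℂ) (d 0)) * (d 1 * (starRingEnd ℂ) (d 1)) *
        (adjugate G 0 1 * adjugate G 1 0) := by
    simp only [_root_.map_mul, map_inv₀, Complex.conj_conj] at hw3
    rw [hstarΔ, hstaradj 1 0, hstarG 1 0] at hw3
    field_simp at hw3
    linear_combination hw3
  -- adjugate entries
  have hadj := Matrix.adjugate_fin_three G
  have h00 : adjugate G 0 0 = 1 - G 1 2 * G 2 1 := by
    rw [hadj]; simp [hG1]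
  have h11 : adjugate G 1 1 = 1 - G 0 2 * G 2 0 := by
    rw [hadj]; simp [hG1]
  have h22 : adjugate G 2 2 = 1 - G 0 1 * G 1 0 := by
    rw [hadj]; simp [hG1]
  have h01 : adjugate G 0 1 = -(G 0 1) + G 0 2 * G 2 1 := by
    rw [hadj]; simp [hG1]
  have h10 : adjugate G 1 0 = -(G 1 0) + G 1 2 * G 2 0 := by
    rw [hadj]; simp [hG1]
  have hdetG : G.det = 1 - G 1 2 * G 2 1 - G 0 1 * G 1 0 - G 0 2 * G 2 0
      + G 0 1 * G 1 2 * G 2 0 + G 0 2 * G 1 0 * G 2 1 := by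
    rw [Matrix.det_fin_three, hG1, hG1, hG1]; ring
  -- scalar endgame
  set Δ := G.det with hΔdef
  set a := G 0 1; set a' := G 1 0; set b := G 0 2; set b' := G 2 0
  set c := G 1 2; set c' := G 2 1
  set D0 := d 0 * (starRingEnd ℂ) (d 0) with hD0def
  set D1 := d 1 * (starRingEnd ℂ) (d 1) with hD1def
  set D2 := d 2 * (starRingEnd ℂ) (d 2) with hD2def
  have hE0 : D0 * (1 - c * c') = Δ := by rw [← h00]; exact hEq 0
  have hE1 : D1 * (1 - b * b') = Δ := by rw [← h11]; exact hEq 1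
  have hE2 : D2 * (1 - a * a') = Δ := by rw [← h22]; exact hEq 2
  have hD0 : D0 ≠ 0 := fun h => hΔ0 (by rw [← hE0, h, zero_mul])
  have hD1 : D1 ≠ 0 := fun h => hΔ0 (by rw [← hE1, h, zero_mul])
  have hF' : a' * a * (Δ * Δ) = D0 * D1 * ((-a + b * c') * (-a' + c * b')) := by
    rw [← h01, ← h10]; linear_combination hF
  have key : a * a' * ((1 - c * c') * (1 - b * b')) = (-a + b * c') * (-a' + c * b') := by
    apply mul_left_cancel₀ (mul_ne_zero hD0 hD1)
    calc D0 * D1 * (a * a' * ((1 - c * c') * (1 - b * b')))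
        = a' * a * ((D0 * (1 - c * c')) * (D1 * (1 - b * b'))) := by ring
      _ = a' * a * (Δ * Δ) := by rw [hE0, hE1]
      _ = D0 * D1 * ((-a + b * c') * (-a' + c * b')) := hF'
  have hprod : (1 - c * c') * (1 - b * b') * (1 - a * a') = Δ := by
    rw [hdetG]; linear_combination (-1 : ℂ) * key
  have hmain : Δ * Δ = D0 * (D1 * D2) := by
    apply mul_left_cancel₀ hΔ0
    have h3 : Δ * (Δ * Δ) = D0 * (D1 * D2) * ((1 - c * c') * (1 - b * b') * (1 - a * a')) := by
      calc Δ * (Δ * Δ) = (D0 * (1 - c * c')) * ((D1 * (1 - b * b')) * (D2 * (1 - a * a'))) := by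
            rw [hE0, hE1, hE2]
        _ = _ := by ring
    rw [hprod] at h3
    linear_combination h3
  -- conclude via absolute values
  have habsΔ : ‖Δ‖ = ‖d 0‖ * ‖d 1‖ * ‖d 2‖ := by
    refine (mul_self_inj (norm_nonneg _) (by positivity)).mp ?_
    have h1 := congrArg (‖·‖) hmain
    rw [hD0def, hD1def, hD2def] at h1
    simp only [norm_mul, Complex.norm_conj] at h1
    rw [h1]; ring
  have habsX : ‖X.det‖ * ‖X.det‖ = ‖Δ‖ := by
    rw [hΔdef, hGdef, Matrix.det_mul, Matrix.det_conjTranspose, norm_mul]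
    rw [show ‖star X.det‖ = ‖X.det‖ by
      simp [Complex.star_def, Complex.norm_conj]]
  have hdetYX : Yᴴ.det * X.det = d 0 * (d 1 * d 2) := by
    rw [← Matrix.det_mul, hYX, Matrix.det_diagonal, Fin.prod_univ_three, mul_assoc]
  have habsYX : ‖Y.det‖ * ‖X.det‖ =
      ‖d 0‖ * ‖d 1‖ * ‖d 2‖ := by
    have h1 := congrArg (‖·‖) hdetYX
    rw [norm_mul, Matrix.det_conjTranspose] at h1
    simp only [norm_mul, Complex.star_def, Complex.norm_conj] at h1
    rw [h1]; ring
  have hXabs0 : ‖X.det‖ ≠ 0 := by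
    simpa using hdetX
  apply mul_right_cancel₀ hXabs0
  rw [habsYX, ← habsΔ, ← habsX]
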